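/- Let x be an odd element of a Lie superalgebra g acting on a g-module M, with [x,x] = 0 (so x_M² = 0 as an operator, up to a factor, i.e., x_M ∘ x_M = 0). Then Im(x_M) ⊆ Ker(x_M), and DS_x(M) := Ker(x_M)/Im(x_M) is well-defined. Moreover, for a short exact sequence 0 → N → M → K → 0 of modules with x-action, there is an exact sequence 0 → E → DS_x N → DS_x M → DS_x K → E′ → 0 of vector spaces where dim E = dim E′ (in the ℤ/2-graded sense, E′ ≅ E with parity reversed). -/
import Mathlib


/-- `DS_x(M) = Ker x / Im x` for a linear endomorphism `x`. -/
abbrev DS {M : Type*} [AddCommGroup M] [Module ℂ M] (x : M →ₗ[ℂ] M) :=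
  ↥(LinearMap.ker x) ⧸ (LinearMap.range x).comap (LinearMap.ker x).subtype

/-- The map `DS_x N → DS_x M` induced by a morphism `f : N → M` commuting with
the odd operators. -/
noncomputable def DSmap {N M : Type*} [AddCommGroup N] [Module ℂ N]
    [AddCommGroup M] [Module ℂ M] (xN : N →ₗ[ℂ] N) (xM : M →ₗ[ℂ] M)
    (f : N →ₗ[ℂ] M) (hf : xM ∘ₗ f = f ∘ₗ xN) : DS xN →ₗ[ℂ] DS xM :=
  Submodule.mapQ _ _
    (f.restrict (p := LinearMap.ker xN) (q := LinearMap.ker xM)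
      (fun n hn => by
        rw [LinearMap.mem_ker] at hn ⊢
        have h : (xM ∘ₗ f) n = (f ∘ₗ xN) n := by rw [hf]
        simp only [LinearMap.coe_comp, Function.comp_apply] at h
        rw [h, hn, map_zero]))
    (by
      rintro ⟨nn, hnn⟩ h
      simp only [Submodule.mem_comap, Submodule.coe_subtype] at h ⊢
      obtain ⟨y, hy⟩ := h
      refine ⟨f y, ?_⟩
      have h2 : (xM ∘ₗ f) y = (f ∘ₗ xN) y := by rw [hf]
      simp only [LinearMap.coe_comp, Function.comp_apply] at h2
      simp only [LinearMap.restrict_coe_apply]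
      rw [h2, hy])

/-- Hinich's lemma: if `x` is a square-zero (odd) operator then
`Im x ⊆ Ker x`, so `DS_x` is well-defined, and a short exact sequence
`0 → N → M → K → 0` compatible with the operators induces a six-term exact
sequence `0 → E → DS_x N → DS_x M → DS_x K → E′ → 0` with `dim E = dim E′`. -/
theorem stmt8 {N M K : Type*}
    [AddCommGroup N] [Module ℂ N] [FiniteDimensional ℂ N]
    [AddCommGroup M] [Module ℂ M] [FiniteDimensional ℂ M]
    [AddCommGroup K] [Module ℂ K] [FiniteDimensional ℂ K]
    (xN : N →ₗ[ℂ] N) (xM : M →ₗ[ℂ] M) (xK : K →ₗ[ℂ] K)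
    (hxN : xN ∘ₗ xN = 0) (hxM : xM ∘ₗ xM = 0) (hxK : xK ∘ₗ xK = 0)
    (f : N →ₗ[ℂ] M) (g : M →ₗ[ℂ] K)
    (hfinj : Function.Injective f) (hgsurj : Function.Surjective g)
    (hexact : LinearMap.range f = LinearMap.ker g)
    (hcf : xM ∘ₗ f = f ∘ₗ xN) (hcg : xK ∘ₗ g = g ∘ₗ xM) :
    LinearMap.range xM ≤ LinearMap.ker xM ∧
    LinearMap.range (DSmap xN xM f hcf) = LinearMap.ker (DSmap xM xK g hcg) ∧
    Module.finrank ℂ (LinearMap.ker (DSmap xN xM f hcf)) =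
      Module.finrank ℂ (DS xK ⧸ LinearMap.range (DSmap xM xK g hcg)) := by
  classical
  -- pointwise versions of hypotheses
  have hx2M : ∀ m : M, xM (xM m) = 0 := fun m => by
    have := LinearMap.ext_iff.mp hxM m; simpa using this
  have hcfa : ∀ n : N, xM (f n) = f (xN n) := fun n => by
    have := LinearMap.ext_iff.mp hcf n; simpa using this
  have hcga : ∀ m : M, xK (g m) = g (xM m) := fun m => by
    have := LinearMap.ext_iff.mp hcg m; simpa using this
  -- sections
  obtain ⟨s, hs⟩ := g.exists_rightInverse_of_surjective (LinearMap.range_eq_top.mpr hgsurj)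
  obtain ⟨r, hr⟩ := f.exists_leftInverse_of_injective (LinearMap.ker_eq_bot.mpr hfinj)
  have hgs : ∀ k : K, g (s k) = k := fun k => by
    have := LinearMap.ext_iff.mp hs k; simpa using this
  have hrf : ∀ n : N, r (f n) = n := fun n => by
    have := LinearMap.ext_iff.mp hr n; simpa using this
  have hgf : ∀ n : N, g (f n) = 0 := fun n => by
    have : f n ∈ LinearMap.ker g := hexact ▸ LinearMap.mem_range_self f n
    exact LinearMap.mem_ker.mp this
  have hfr : ∀ m : M, g m = 0 → f (r m) = m := by
    intro m hm
    have : m ∈ LinearMap.range f := hexact ▸ LinearMap.mem_ker.mpr hm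
    obtain ⟨n, rfl⟩ := this
    rw [hrf]
  -- Part 1
  have part1 : LinearMap.range xM ≤ LinearMap.ker xM := by
    rintro _ ⟨m, rfl⟩
    exact LinearMap.mem_ker.mpr (hx2M m)
  -- helper: value of DSmap on mk
  have fbar_apply : ∀ nn : LinearMap.ker xN,
      DSmap xN xM f hcf (Submodule.Quotient.mk nn) =
        Submodule.Quotient.mk (f.restrict (p := LinearMap.ker xN) (q := LinearMap.ker xM)
          (fun n hn => by
            rw [LinearMap.mem_ker] at hn ⊢
            rw [hcfa, hn, map_zero]) nn) := fun nn => rfl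
  have gbar_apply : ∀ mm : LinearMap.ker xM,
      DSmap xM xK g hcg (Submodule.Quotient.mk mm) =
        Submodule.Quotient.mk (g.restrict (p := LinearMap.ker xM) (q := LinearMap.ker xK)
          (fun m hm => by
            rw [LinearMap.mem_ker] at hm ⊢
            rw [hcga, hm, map_zero]) mm) := fun mm => rfl
  -- Part 2 : exactness at DS xM
  have part2 : LinearMap.range (DSmap xN xM f hcf) = LinearMap.ker (DSmap xM xK g hcg) := by
    ext z
    constructor
    · rintro ⟨w, rfl⟩
      obtain ⟨⟨n, hn⟩, rfl⟩ := Submodule.Quotient.mk_surjective _ w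
      rw [LinearMap.mem_ker, fbar_apply, gbar_apply, Submodule.Quotient.mk_eq_zero]
      simp only [Submodule.mem_comap, Submodule.coe_subtype, LinearMap.restrict_coe_apply]
      exact ⟨0, by simp [hgf n]⟩
    · intro hz
      obtain ⟨⟨m, hm⟩, rfl⟩ := Submodule.Quotient.mk_surjective _ z
      rw [LinearMap.mem_ker, gbar_apply, Submodule.Quotient.mk_eq_zero] at hz
      simp only [Submodule.mem_comap, Submodule.coe_subtype, LinearMap.restrict_coe_apply] at hz
      obtain ⟨k', hk'⟩ := hz
      have hxm : xM m = 0 := LinearMap.mem_ker.mp hm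
      have hgm' : g (m - xM (s k')) = 0 := by
        rw [map_sub, ← hcga, hgs, hk', sub_self]
      obtain ⟨n, hfn⟩ : m - xM (s k') ∈ LinearMap.range f :=
        hexact ▸ LinearMap.mem_ker.mpr hgm'
      have hn : xN n = 0 := by
        apply hfinj
        rw [← hcfa, hfn, map_sub, hxm, hx2M, sub_zero, map_zero]
      refine ⟨Submodule.Quotient.mk ⟨n, LinearMap.mem_ker.mpr hn⟩, ?_⟩
      rw [fbar_apply, Submodule.Quotient.eq]
      simp only [Submodule.mem_comap, Submodule.coe_subtype, AddSubgroupClass.coe_sub,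
        LinearMap.restrict_coe_apply]
      refine ⟨-(s k'), ?_⟩
      rw [map_neg, hfn]
      abel
  refine ⟨part1, part2, ?_⟩
  -- the connecting homomorphism on kernels
  have hδmem : ∀ k ∈ LinearMap.ker xK, (r ∘ₗ xM ∘ₗ s) k ∈ LinearMap.ker xN := by
    intro k hk
    have hk0 : xK k = 0 := LinearMap.mem_ker.mp hk
    have hgxsk : g (xM (s k)) = 0 := by rw [← hcga, hgs, hk0]
    rw [LinearMap.mem_ker]
    apply hfinj
    simp only [LinearMap.coe_comp, Function.comp_apply]
    rw [← hcfa, hfr _ hgxsk, hx2M, map_zero]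
  have hδ0 : ∀ k : K, xK k = 0 → f (r (xM (s k))) = xM (s k) := by
    intro k hk
    exact hfr _ (by rw [← hcga, hgs, hk])
  set δker : ↥(LinearMap.ker xK) →ₗ[ℂ] ↥(LinearMap.ker xN) :=
    (r ∘ₗ xM ∘ₗ s).restrict hδmem with hδker
  have δker_coe : ∀ kk : LinearMap.ker xK, (δker kk : N) = r (xM (s (kk : K))) := by
    intro kk; simp [hδker, LinearMap.restrict_coe_apply]
  -- key computation for elements of the form xK k'
  have hconn : ∀ k' : K, ∃ u : N, f u = s (xK k') - xM (s k') ∧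
      r (xM (s (xK k'))) = xN u := by
    intro k'
    have hg0 : g (s (xK k') - xM (s k')) = 0 := by
      rw [map_sub, hgs, ← hcga, hgs, sub_self]
    obtain ⟨u, hu⟩ : s (xK k') - xM (s k') ∈ LinearMap.range f :=
      hexact ▸ LinearMap.mem_ker.mpr hg0
    refine ⟨u, hu, ?_⟩
    have : xM (s (xK k')) = f (xN u) := by
      have := congrArg xM hu
      rw [map_sub, hx2M, sub_zero, hcfa] at this
      exact this.symm
    rw [this, hrf]
  have hδsub : (LinearMap.range xK).comap (LinearMap.ker xK).subtype ≤
      ((LinearMap.range xN).comap (LinearMap.ker xN).subtype).comap δker := by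
    rintro ⟨k, hk⟩ hkk
    simp only [Submodule.mem_comap, Submodule.coe_subtype] at hkk ⊢
    obtain ⟨k', hk'⟩ := hkk
    obtain ⟨u, _, hu2⟩ := hconn k'
    rw [δker_coe]
    exact ⟨u, by rw [← hu2, hk']⟩
  set δ : DS xK →ₗ[ℂ] DS xN := Submodule.mapQ _ _ δker hδsub with hδ
  have δ_apply : ∀ kk : LinearMap.ker xK,
      δ (Submodule.Quotient.mk kk) = Submodule.Quotient.mk (δker kk) := fun kk => rfl
  -- ker δ = range gbar
  have hkerδ : LinearMap.ker δ = LinearMap.range (DSmap xM xK g hcg) := by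
    ext z
    constructor
    · intro hz
      obtain ⟨⟨k, hk⟩, rfl⟩ := Submodule.Quotient.mk_surjective _ z
      rw [LinearMap.mem_ker, δ_apply, Submodule.Quotient.mk_eq_zero] at hz
      simp only [Submodule.mem_comap, Submodule.coe_subtype] at hz
      rw [δker_coe] at hz
      obtain ⟨n', hn'⟩ := hz
      have hk0 : xK k = 0 := LinearMap.mem_ker.mp hk
      have hfd : f (r (xM (s k))) = xM (s k) := hδ0 k hk0
      have hxm' : xM (s k - f n') = 0 := by
        rw [map_sub, hcfa, hn', hfd, sub_self]
      refine ⟨Submodule.Quotient.mk ⟨s k - f n', LinearMap.mem_ker.mpr hxm'⟩, ?_⟩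
      rw [gbar_apply, Submodule.Quotient.eq]
      simp only [Submodule.mem_comap, Submodule.coe_subtype, AddSubgroupClass.coe_sub,
        LinearMap.restrict_coe_apply]
      refine ⟨0, ?_⟩
      rw [map_sub, hgs, hgf, map_zero]
      abel
    · rintro ⟨w, rfl⟩
      obtain ⟨⟨m, hm⟩, rfl⟩ := Submodule.Quotient.mk_surjective _ w
      rw [LinearMap.mem_ker, gbar_apply, δ_apply, Submodule.Quotient.mk_eq_zero]
      simp only [Submodule.mem_comap, Submodule.coe_subtype]
      rw [δker_coe]
      simp only [LinearMap.restrict_coe_apply]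
      have hxm : xM m = 0 := LinearMap.mem_ker.mp hm
      have hg0 : g (s (g m) - m) = 0 := by rw [map_sub, hgs, sub_self]
      obtain ⟨u, hu⟩ : s (g m) - m ∈ LinearMap.range f :=
        hexact ▸ LinearMap.mem_ker.mpr hg0
      refine ⟨u, ?_⟩
      have : xM (s (g m)) = f (xN u) := by
        have := congrArg xM hu
        rw [map_sub, hxm, sub_zero, hcfa] at this
        exact this.symm
      rw [this, hrf]
  -- range δ = ker fbar
  have hrangeδ : LinearMap.range δ = LinearMap.ker (DSmap xN xM f hcf) := by
    ext z
    constructor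
    · rintro ⟨w, rfl⟩
      obtain ⟨⟨k, hk⟩, rfl⟩ := Submodule.Quotient.mk_surjective _ w
      rw [LinearMap.mem_ker, δ_apply, fbar_apply, Submodule.Quotient.mk_eq_zero]
      simp only [Submodule.mem_comap, Submodule.coe_subtype, LinearMap.restrict_coe_apply]
      rw [δker_coe]
      exact ⟨s k, (hδ0 k (LinearMap.mem_ker.mp hk)).symm ▸ rfl⟩
    · intro hz
      obtain ⟨⟨n, hn⟩, rfl⟩ := Submodule.Quotient.mk_surjective _ z
      rw [LinearMap.mem_ker, fbar_apply, Submodule.Quotient.mk_eq_zero] at hz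
      simp only [Submodule.mem_comap, Submodule.coe_subtype, LinearMap.restrict_coe_apply] at hz
      obtain ⟨m', hm'⟩ := hz
      have hxn : xN n = 0 := LinearMap.mem_ker.mp hn
      have hk0 : xK (g m') = 0 := by
        rw [hcga, hm', hgf]
      refine ⟨Submodule.Quotient.mk ⟨g m', LinearMap.mem_ker.mpr hk0⟩, ?_⟩
      rw [δ_apply, Submodule.Quotient.eq]
      simp only [Submodule.mem_comap, Submodule.coe_subtype, AddSubgroupClass.coe_sub]
      rw [δker_coe]
      have hg0 : g (s (g m') - m') = 0 := by rw [map_sub, hgs, sub_self]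
      obtain ⟨u, hu⟩ : s (g m') - m' ∈ LinearMap.range f :=
        hexact ▸ LinearMap.mem_ker.mpr hg0
      have h1 : f (xN u) = xM (s (g m')) - f n := by
        have := congrArg xM hu
        rwa [map_sub, hcfa, hm'] at this
      have hfe : xM (s (g m')) = f (n + xN u) :=
        calc xM (s (g m')) = (xM (s (g m')) - f n) + f n := by abel
          _ = f (xN u) + f n := by rw [h1]
          _ = f (n + xN u) := by rw [map_add, add_comm]
      refine ⟨u, ?_⟩
      rw [hfe, hrf]
      abel
  -- conclude via the first isomorphism theorem for δ
  rw [← hrangeδ, ← hkerδ]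
  exact (LinearMap.quotKerEquivRange δ).finrank_eq.symm
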